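/- In the group Ñ_{3,2}, the element g = z_{21} z_{31} z_{32} has palindromic length exactly 4 with respect to the generating family Y = (y_1, y_2, y_3); that is, g is a product of 4 palindromes but not a product of 3 palindromes. -/

import Mathlib

set_option maxRecDepth 100000


/-- The element of `G` represented by a word in the alphabet `X^{±1}`:
a letter `(i, true)` stands for `X i` and `(i, false)` for `(X i)⁻¹`. -/
def evalWord {G : Type*} {n : ℕ} [Group G] (X : Fin n → G) (w : List (Fin n × Bool)) : G :=
  (w.map fun l => if l.2 then X l.1 else (X l.1)⁻¹).prod

/-- `g` is a palindrome with respect to the generating family `X` if it is represented by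
some word whose sequence of letters equals its reverse. -/
def IsPalindrome {G : Type*} {n : ℕ} [Group G] (X : Fin n → G) (g : G) : Prop :=
  ∃ w : List (Fin n × Bool), w.reverse = w ∧ evalWord X w = g

/-- `g` is a product of `k` palindromes with respect to `X`. -/
def IsPalProd {G : Type*} {n : ℕ} [Group G] (X : Fin n → G) (k : ℕ) (g : G) : Prop :=
  ∃ f : Fin k → G, (∀ i, IsPalindrome X (f i)) ∧ (List.ofFn f).prod = g

/-- The palindromic length of `g` with respect to `X`, valued in `ℕ∞`. -/
noncomputable def palLength {G : Type*} {n : ℕ} [Group G] (X : Fin n → G) (g : G) : ℕ∞ :=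
  sInf {k : ℕ∞ | ∃ m : ℕ, k = (m : ℕ∞) ∧ IsPalProd X m g}

/-- The palindromic width of `G` with respect to `X`, valued in `ℕ∞`. -/
noncomputable def palWidth {G : Type*} {n : ℕ} [Group G] (X : Fin n → G) : ℕ∞ :=
  ⨆ g : G, palLength X g

/-- The free nilpotent group `N_{n,r}` of rank `n` and step `r`: the quotient of the free
group on `n` generators by `γ_{r+1} = lowerCentralSeries _ r` (indices: `γ_1` is the
whole group and corresponds to index `0`). -/
abbrev FreeNilpotent (n r : ℕ) :=
  FreeGroup (Fin n) ⧸ Subgroup.lowerCentralSeries (⊤ : Subgroup (FreeGroup (Fin n))) r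

/-- The images `x_1, …, x_n` of the free basis in `N_{n,r}`. -/
def nilGen (n r : ℕ) (i : Fin n) : FreeNilpotent n r :=
  QuotientGroup.mk (FreeGroup.of i)

/-- `Ñ_{n,r}`: the quotient of `N_{n,r}` by the normal closure of the squares of the
generators. -/
abbrev TildeNil (n r : ℕ) :=
  FreeNilpotent n r ⧸ Subgroup.normalClosure (Set.range fun i : Fin n => nilGen n r i ^ 2)

/-- The generating family `y_1, …, y_n` of `Ñ_{n,r}`. -/
def tnGen (n r : ℕ) (i : Fin n) : TildeNil n r := QuotientGroup.mk (nilGen n r i)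

/-- The commutator convention of the paper: `[a, b] = a⁻¹ b⁻¹ a b`. -/
def pcomm {G : Type*} [Group G] (a b : G) : G := a⁻¹ * b⁻¹ * a * b

open scoped commutatorElement

structure MM where
  a1 : Bool
  a2 : Bool
  a3 : Bool
  c1 : Bool
  c2 : Bool
  c3 : Bool
deriving DecidableEq

namespace MM

def eqv : MM ≃ (Bool × Bool × Bool × Bool × Bool × Bool) where
  toFun x := (x.a1, x.a2, x.a3, x.c1, x.c2, x.c3)
  invFun p := ⟨p.1, p.2.1, p.2.2.1, p.2.2.2.1, p.2.2.2.2.1, p.2.2.2.2.2⟩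
  left_inv _ := rfl
  right_inv _ := rfl

instance : Fintype MM := Fintype.ofEquiv _ eqv.symm

def mul (x y : MM) : MM :=
  ⟨xor x.a1 y.a1, xor x.a2 y.a2, xor x.a3 y.a3,
    xor (xor x.c1 y.c1) (x.a2 && y.a1), xor (xor x.c2 y.c2) (x.a3 && y.a1),
    xor (xor x.c3 y.c3) (x.a3 && y.a2)⟩

def inv (x : MM) : MM :=
  ⟨x.a1, x.a2, x.a3, xor x.c1 (x.a1 && x.a2), xor x.c2 (x.a1 && x.a3),
    xor x.c3 (x.a2 && x.a3)⟩

lemma mul_assoc' : ∀ x y z : MM, mul (mul x y) z = mul x (mul y z) := by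
  rintro ⟨xa1,xa2,xa3,xc1,xc2,xc3⟩ ⟨ya1,ya2,ya3,yc1,yc2,yc3⟩ ⟨za1,za2,za3,zc1,zc2,zc3⟩
  simp only [mul, MM.mk.injEq, Bool.and_xor_distrib_right, Bool.and_xor_distrib_left]
  refine ⟨?_,?_,?_,?_,?_,?_⟩ <;>
    simp [Bool.xor_assoc, Bool.xor_comm, Bool.xor_left_comm, Bool.and_assoc, Bool.and_comm, Bool.and_left_comm]

lemma one_mul' : ∀ x : MM, mul ⟨false,false,false,false,false,false⟩ x = x := by decide

lemma mul_one' : ∀ x : MM, mul x ⟨false,false,false,false,false,false⟩ = x := by decide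

lemma inv_mul' : ∀ x : MM, mul (inv x) x = ⟨false,false,false,false,false,false⟩ := by decide

end MM

namespace MM

instance : Group MM where
  mul := mul
  one := ⟨false,false,false,false,false,false⟩
  inv := inv
  mul_assoc := mul_assoc'
  one_mul := one_mul'
  mul_one := mul_one'
  inv_mul_cancel := inv_mul'

lemma mul_def (x y : MM) : x * y = mul x y := rfl
lemma inv_def (x : MM) : x⁻¹ = inv x := rfl
lemma one_def : (1 : MM) = ⟨false,false,false,false,false,false⟩ := rfl

def Zc : Subgroup MM where
  carrier := {g | g.a1 = false ∧ g.a2 = false ∧ g.a3 = false}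
  mul_mem' := by
    rintro ⟨⟩ ⟨⟩ ⟨h1, h2, h3⟩ ⟨h4, h5, h6⟩
    simp_all [mul_def, mul]
  one_mem' := by simp [one_def]
  inv_mem' := by
    rintro ⟨⟩ ⟨h1, h2, h3⟩
    simp_all [inv_def, inv]

lemma Zc_le_center : Zc ≤ Subgroup.center MM := by
  rintro ⟨⟩ ⟨h1, h2, h3⟩
  subst h1; subst h2; subst h3
  rw [Subgroup.mem_center_iff]
  rintro ⟨⟩
  simp [mul_def, mul, Bool.xor_comm]

lemma comm_mem_Zc : ∀ x y : MM, ⁅x, y⁆ ∈ Zc := by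
  rintro ⟨⟩ ⟨⟩
  simp only [commutatorElement_def, mul_def, inv_def, mul, inv, Zc]
  refine ⟨?_, ?_, ?_⟩ <;>
    simp [Bool.xor_assoc, Bool.xor_comm, Bool.xor_left_comm]

lemma lcs_two : Subgroup.lowerCentralSeries (⊤ : Subgroup MM) 2 = ⊥ := by
  have h1 : Subgroup.lowerCentralSeries (⊤ : Subgroup MM) 1 ≤ Subgroup.center MM := by
    rw [show (1:ℕ) = 0 + 1 from rfl, Subgroup.lowerCentralSeries_succ, Subgroup.commutator_def, Subgroup.closure_le]
    rintro x ⟨p, -, q, -, rfl⟩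
    exact Zc_le_center (comm_mem_Zc p q)
  rw [show (2:ℕ) = 1 + 1 from rfl, Subgroup.lowerCentralSeries_succ, Subgroup.commutator_def, eq_bot_iff,
    Subgroup.closure_le]
  rintro x ⟨p, hp, q, -, rfl⟩
  have hpq : p * q * p⁻¹ * q⁻¹ = 1 := by
    have hc := Subgroup.mem_center_iff.mp (h1 hp) q
    rw [← hc]
    group
  simp [commutatorElement_def, hpq]

end MM

namespace MM

def gen : Fin 3 → MM
  | 0 => ⟨true, false, false, false, false, false⟩
  | 1 => ⟨false, true, false, false, false, false⟩
  | 2 => ⟨false, false, true, false, false, false⟩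

lemma gen_sq : ∀ i : Fin 3, gen i * gen i = 1 := by decide

lemma gen_inv : ∀ i : Fin 3, (gen i)⁻¹ = gen i := by decide

/-- superset of palindrome values -/
def P (g : MM) : Prop :=
  g = 1 ∨ (g.a1 = true ∧ g.a2 = false ∧ g.a3 = false ∧ g.c3 = false) ∨
    (g.a1 = false ∧ g.a2 = true ∧ g.a3 = false ∧ g.c2 = false) ∨
    (g.a1 = false ∧ g.a2 = false ∧ g.a3 = true ∧ g.c1 = false)

instance : DecidablePred P := fun g => by unfold P; infer_instance

lemma P_one : P 1 := Or.inl rfl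

lemma P_gen : ∀ i : Fin 3, P (gen i) := by decide

lemma P_conj : ∀ i : Fin 3, ∀ g : MM, P g → P (gen i * g * gen i) := by decide

def gM : MM := ⟨false, false, false, true, true, true⟩

def Lpal : List MM :=
  [1, ⟨true,false,false,false,false,false⟩, ⟨true,false,false,true,false,false⟩,
    ⟨true,false,false,false,true,false⟩, ⟨true,false,false,true,true,false⟩,
    ⟨false,true,false,false,false,false⟩, ⟨false,true,false,true,false,false⟩,
    ⟨false,true,false,false,false,true⟩, ⟨false,true,false,true,false,true⟩,
    ⟨false,false,true,false,false,false⟩, ⟨false,false,true,false,true,false⟩,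
    ⟨false,false,true,false,false,true⟩, ⟨false,false,true,false,true,true⟩]

lemma P_mem_Lpal : ∀ g : MM, P g → g ∈ Lpal := by decide

lemma no_three_aux : ∀ p ∈ Lpal, ∀ q ∈ Lpal, ∀ r ∈ Lpal, p * q * r ≠ gM := by decide

lemma no_three : ∀ p q r : MM, P p → P q → P r → p * q * r ≠ gM := fun p q r hp hq hr =>
  no_three_aux p (P_mem_Lpal p hp) q (P_mem_Lpal q hq) r (P_mem_Lpal r hr)

lemma target_eq :
    (gen 1)⁻¹ * (gen 0)⁻¹ * gen 1 * gen 0 * ((gen 2)⁻¹ * (gen 0)⁻¹ * gen 2 * gen 0) *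
      ((gen 2)⁻¹ * (gen 1)⁻¹ * gen 2 * gen 1) = gM := by decide

end MM

-- ## the homomorphism to MM

def psi0 : FreeGroup (Fin 3) →* MM := FreeGroup.lift MM.gen

lemma lcs_le_ker : Subgroup.lowerCentralSeries (⊤ : Subgroup (FreeGroup (Fin 3))) 2 ≤ psi0.ker := by
  intro x hx
  have h1 : psi0 x ∈ Subgroup.map psi0 (Subgroup.lowerCentralSeries (⊤ : Subgroup (FreeGroup (Fin 3))) 2) :=
    Subgroup.mem_map_of_mem _ hx
  have h2 := lowerCentralSeries.map psi0 2 h1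
  rw [MM.lcs_two, Subgroup.mem_bot] at h2
  exact h2

def phi1 : FreeNilpotent 3 2 →* MM := QuotientGroup.lift _ psi0 lcs_le_ker

lemma phi1_nilGen (i : Fin 3) : phi1 (nilGen 3 2 i) = MM.gen i := by
  rw [phi1, nilGen, QuotientGroup.lift_mk]
  simp [psi0]

lemma ncl_le_ker :
    Subgroup.normalClosure (Set.range fun i : Fin 3 => nilGen 3 2 i ^ 2) ≤ phi1.ker := by
  apply Subgroup.normalClosure_le_normal
  rintro x ⟨i, rfl⟩
  have : phi1 (nilGen 3 2 i ^ 2) = 1 := by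
    rw [map_pow, phi1_nilGen, pow_two, MM.gen_sq]
  exact this

def phi : TildeNil 3 2 →* MM := QuotientGroup.lift _ phi1 ncl_le_ker

lemma phi_tnGen (i : Fin 3) : phi (tnGen 3 2 i) = MM.gen i := by
  rw [tnGen, phi, QuotientGroup.lift_mk', phi1_nilGen]

-- ## transfer lemmas

lemma evalWord_cons {G : Type*} {n : ℕ} [Group G] (X : Fin n → G) (l : Fin n × Bool)
    (w : List (Fin n × Bool)) :
    evalWord X (l :: w) = (if l.2 then X l.1 else (X l.1)⁻¹) * evalWord X w := by
  simp [evalWord]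

lemma evalWord_append {G : Type*} {n : ℕ} [Group G] (X : Fin n → G)
    (w v : List (Fin n × Bool)) :
    evalWord X (w ++ v) = evalWord X w * evalWord X v := by
  simp [evalWord]

lemma evalWord_map {G H : Type*} {n : ℕ} [Group G] [Group H] (f : G →* H) (X : Fin n → G)
    (w : List (Fin n × Bool)) : evalWord (fun i => f (X i)) w = f (evalWord X w) := by
  induction w with
  | nil => simp [evalWord]
  | cons l w ih =>
    rw [evalWord_cons, evalWord_cons, ih, map_mul]
    congr 1
    cases l.2 <;> simp

lemma pal_value_P (w : List (Fin 3 × Bool)) (hw : w.reverse = w) :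
    MM.P (evalWord MM.gen w) := by
  have hp := List.Palindrome.of_reverse_eq hw
  clear hw
  induction hp with
  | nil => simpa [evalWord] using MM.P_one
  | singleton l =>
    have : evalWord MM.gen [l] = MM.gen l.1 := by
      cases hb : l.2 <;> simp [evalWord, hb, MM.gen_inv]
    rw [this]; exact MM.P_gen l.1
  | cons_concat l _ ih =>
    have hl : (if l.2 then MM.gen l.1 else (MM.gen l.1)⁻¹) = MM.gen l.1 := by
      cases hb : l.2 <;> simp [MM.gen_inv]
    rw [evalWord_cons, evalWord_append, hl]
    have : evalWord MM.gen [l] = MM.gen l.1 := by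
      cases hb : l.2 <;> simp [evalWord, hb, MM.gen_inv]
    rw [this, ← mul_assoc]
    exact MM.P_conj l.1 _ ih

lemma phi_pal {g : TildeNil 3 2} (hg : IsPalindrome (tnGen 3 2) g) : MM.P (phi g) := by
  obtain ⟨w, hrev, hval⟩ := hg
  have := evalWord_map phi (tnGen 3 2) w
  have hgen : (fun i => phi (tnGen 3 2 i)) = MM.gen := funext phi_tnGen
  rw [hgen] at this
  rw [← hval, ← this]
  exact pal_value_P w hrev

-- ## lower central series under surjections

lemma lcs_map_surj {G H : Type*} [Group G] [Group H] (f : G →* H)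
    (hf : Function.Surjective f) :
    ∀ n, Subgroup.map f (Subgroup.lowerCentralSeries (⊤ : Subgroup G) n) = Subgroup.lowerCentralSeries (⊤ : Subgroup H) n
  | 0 => by simpa using Subgroup.map_top_of_surjective f hf
  | n + 1 => by
    rw [Subgroup.lowerCentralSeries_succ, Subgroup.lowerCentralSeries_succ, Subgroup.commutator_def,
      Subgroup.commutator_def, MonoidHom.map_closure]
    congr 1
    ext x
    constructor
    · rintro ⟨y, ⟨p, hp, q, -, rfl⟩, rfl⟩
      refine ⟨f p, ?_, f q, Subgroup.mem_top _, by simp⟩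
      rw [← lcs_map_surj f hf n]
      exact Subgroup.mem_map_of_mem f hp
    · rintro ⟨p', hp', q', -, rfl⟩
      rw [← lcs_map_surj f hf n] at hp'
      obtain ⟨p, hp, rfl⟩ := hp'
      obtain ⟨q, rfl⟩ := hf q'
      exact ⟨p * q * p⁻¹ * q⁻¹, ⟨p, hp, q, Subgroup.mem_top _, rfl⟩, by simp [commutatorElement_def]⟩

lemma freeNil_lcs : Subgroup.lowerCentralSeries (⊤ : Subgroup (FreeNilpotent 3 2)) 2 = ⊥ := by
  rw [← lcs_map_surj (QuotientGroup.mk' (Subgroup.lowerCentralSeries (⊤ : Subgroup (FreeGroup (Fin 3))) 2))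
    (QuotientGroup.mk'_surjective _) 2, Subgroup.map_eq_bot_iff, QuotientGroup.ker_mk']

lemma tn_lcs : Subgroup.lowerCentralSeries (⊤ : Subgroup (TildeNil 3 2)) 2 = ⊥ := by
  rw [← lcs_map_surj (QuotientGroup.mk'
      (Subgroup.normalClosure (Set.range fun i : Fin 3 => nilGen 3 2 i ^ 2)))
    (QuotientGroup.mk'_surjective _) 2, freeNil_lcs, Subgroup.map_bot]

lemma tn_comm_central (a b x : TildeNil 3 2) : ⁅a, b⁆ * x = x * ⁅a, b⁆ := by
  have m1 : ⁅a, b⁆ ∈ Subgroup.lowerCentralSeries (⊤ : Subgroup (TildeNil 3 2)) 1 :=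
    Subgroup.commutator_mem_commutator (Subgroup.mem_top a) (Subgroup.mem_top b)
  have m2 : ⁅⁅a, b⁆, x⁆ ∈ Subgroup.lowerCentralSeries (⊤ : Subgroup (TildeNil 3 2)) 2 :=
    Subgroup.commutator_mem_commutator m1 (Subgroup.mem_top x)
  rw [tn_lcs, Subgroup.mem_bot, commutatorElement_eq_one_iff_commute] at m2
  exact m2

lemma tn_sq (i : Fin 3) : tnGen 3 2 i * tnGen 3 2 i = 1 := by
  rw [← pow_two, tnGen, ← QuotientGroup.mk_pow, QuotientGroup.eq_one_iff]
  exact Subgroup.subset_normalClosure ⟨i, rfl⟩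

-- ## core identity in class-2 groups with involutive letters

section Core

variable {G : Type*} [Group G]

lemma pcomm_central (hz : ∀ x y w : G, ⁅x, y⁆ * w = w * ⁅x, y⁆) (a b x : G) :
    pcomm a b * x = x * pcomm a b := by
  have h : pcomm a b = ⁅a⁻¹, b⁻¹⁆ := by
    simp [pcomm, commutatorElement_def]
  rw [h]; exact hz _ _ _

lemma pcomm_bilin (hz : ∀ x y w : G, ⁅x, y⁆ * w = w * ⁅x, y⁆) (x y w : G) :
    pcomm (x * y) w = pcomm x w * pcomm y w := by
  have h1 : pcomm (x * y) w = y⁻¹ * (pcomm x w * (w⁻¹ * y * w)) := by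
    simp only [pcomm]; group
  rw [h1, pcomm_central hz,
    show y⁻¹ * (w⁻¹ * y * w * pcomm x w) = (y⁻¹ * (w⁻¹ * y * w)) * pcomm x w from by group,
    show y⁻¹ * (w⁻¹ * y * w) = pcomm y w from by simp only [pcomm]; group]
  exact pcomm_central hz y w (pcomm x w)

lemma pcomm_swap (x y : G) : x * y = y * x * pcomm x y := by
  simp only [pcomm]; group

lemma core_identity (a b c : G) (hz : ∀ x y w : G, ⁅x, y⁆ * w = w * ⁅x, y⁆)
    (ha : a * a = 1) (hb : b * b = 1) (hc : c * c = 1) :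
    a * b * c * a * b * c = pcomm b a * pcomm c a * pcomm c b := by
  have hP := pcomm_central hz
  have hB := pcomm_bilin hz
  calc a * b * c * a * b * c
      = a * ((b * c) * a) * (b * c) := by group
    _ = a * (a * (b * c) * pcomm (b * c) a) * (b * c) := by rw [pcomm_swap (b * c) a]
    _ = a * a * ((b * c) * (pcomm (b * c) a * (b * c))) := by group
    _ = a * a * ((b * c) * ((b * c) * pcomm (b * c) a)) := by rw [hP]
    _ = (b * c) * (b * c) * pcomm (b * c) a := by rw [ha]; group
    _ = b * ((c * b) * c) * pcomm (b * c) a := by group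
    _ = b * ((b * c * pcomm c b) * c) * pcomm (b * c) a := by rw [pcomm_swap c b]
    _ = b * b * (c * (pcomm c b * c)) * pcomm (b * c) a := by group
    _ = b * b * (c * (c * pcomm c b)) * pcomm (b * c) a := by rw [hP]
    _ = c * c * pcomm c b * pcomm (b * c) a := by rw [hb]; group
    _ = pcomm c b * pcomm (b * c) a := by rw [hc]; group
    _ = pcomm c b * (pcomm b a * pcomm c a) := by rw [hB]
    _ = (pcomm b a * pcomm c a) * pcomm c b := by rw [hP]
    _ = pcomm b a * pcomm c a * pcomm c b := by group

end Core

-- ## padding and monotonicity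

lemma isPalindrome_one {G : Type*} {n : ℕ} [Group G] (X : Fin n → G) :
    IsPalindrome X (1 : G) := ⟨[], rfl, rfl⟩

lemma IsPalProd_mono {G : Type*} {n : ℕ} [Group G] {X : Fin n → G} {g : G} {m k : ℕ}
    (hmk : m ≤ k) (hm : IsPalProd X m g) : IsPalProd X k g := by
  induction k, hmk using Nat.le_induction with
  | base => exact hm
  | succ n hn ih =>
    obtain ⟨f, hf, hp⟩ := ih
    refine ⟨Fin.snoc f 1, ?_, ?_⟩
    · intro i
      refine Fin.lastCases ?_ ?_ i
      · rw [Fin.snoc_last]; exact isPalindrome_one X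
      · intro j; rw [Fin.snoc_castSucc]; exact hf j
    · rw [List.ofFn_succ', List.concat_eq_append, List.prod_append, Fin.snoc_last]
      have he : (Fin.snoc f (1 : G) ∘ Fin.castSucc) = f := funext fun j => Fin.snoc_castSucc _ _ _
      simp [he, hp]

-- ## main pieces

lemma upper : IsPalProd (tnGen 3 2) 4
    (pcomm (tnGen 3 2 1) (tnGen 3 2 0) * pcomm (tnGen 3 2 2) (tnGen 3 2 0) *
      pcomm (tnGen 3 2 2) (tnGen 3 2 1)) := by
  set y := tnGen 3 2 with hy
  refine ⟨![y 0, y 1, y 2 * y 0 * y 2, y 2 * y 1 * y 2], ?_, ?_⟩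
  · intro i
    fin_cases i
    · exact ⟨[(0, true)], by decide, by simp [evalWord]⟩
    · exact ⟨[(1, true)], by decide, by simp [evalWord]⟩
    · exact ⟨[(2, true), (0, true), (2, true)], by decide, by simp [evalWord, mul_assoc]⟩
    · exact ⟨[(2, true), (1, true), (2, true)], by decide, by simp [evalWord, mul_assoc]⟩
  · have key := core_identity (y 0) (y 1) (y 2) tn_comm_central (tn_sq 0) (tn_sq 1) (tn_sq 2)
    have h1 : (List.ofFn ![y 0, y 1, y 2 * y 0 * y 2, y 2 * y 1 * y 2]).prod
        = y 0 * y 1 * (y 2 * y 0 * ((y 2 * y 2) * (y 1 * y 2))) := by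
      simp [List.ofFn_succ]
      group
    rw [h1, tn_sq 2, one_mul, show y 0 * y 1 * (y 2 * y 0 * (y 1 * y 2))
      = y 0 * y 1 * y 2 * y 0 * y 1 * y 2 from by group, key]

lemma lower : ¬ IsPalProd (tnGen 3 2) 3
    (pcomm (tnGen 3 2 1) (tnGen 3 2 0) * pcomm (tnGen 3 2 2) (tnGen 3 2 0) *
      pcomm (tnGen 3 2 2) (tnGen 3 2 1)) := by
  rintro ⟨f, hf, hprod⟩
  have h0 := phi_pal (hf 0)
  have h1 := phi_pal (hf 1)
  have h2 := phi_pal (hf 2)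
  have hval : phi ((List.ofFn f).prod) = MM.gM := by
    rw [hprod]
    simp only [pcomm, map_mul, map_inv, phi_tnGen]
    exact MM.target_eq
  have hsplit : phi ((List.ofFn f).prod) = phi (f 0) * phi (f 1) * phi (f 2) := by
    simp [List.ofFn_succ, mul_assoc]
  exact MM.no_three _ _ _ h0 h1 h2 (by rw [← hsplit, hval])


/-- In `Ñ_{3,2}`, the element `z₂₁ z₃₁ z₃₂` has palindromic length exactly 4:
it is a product of 4 palindromes but not a product of 3 palindromes. -/
theorem palLength_z21z31z32 :
    IsPalProd (tnGen 3 2) 4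
        (pcomm (tnGen 3 2 1) (tnGen 3 2 0) * pcomm (tnGen 3 2 2) (tnGen 3 2 0) *
          pcomm (tnGen 3 2 2) (tnGen 3 2 1)) ∧
      ¬ IsPalProd (tnGen 3 2) 3
        (pcomm (tnGen 3 2 1) (tnGen 3 2 0) * pcomm (tnGen 3 2 2) (tnGen 3 2 0) *
          pcomm (tnGen 3 2 2) (tnGen 3 2 1)) ∧
      palLength (tnGen 3 2)
        (pcomm (tnGen 3 2 1) (tnGen 3 2 0) * pcomm (tnGen 3 2 2) (tnGen 3 2 0) *
          pcomm (tnGen 3 2 2) (tnGen 3 2 1)) = 4 := by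
  refine ⟨upper, lower, ?_⟩
  apply le_antisymm
  · exact sInf_le ⟨4, rfl, upper⟩
  · apply le_sInf
    rintro k ⟨m, rfl, hm⟩
    rcases le_or_gt m 3 with h | h
    · exact absurd (IsPalProd_mono h hm) lower
    · exact_mod_cast h
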